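/- Let α ∈ (0,1) be irrational and m a positive integer with {mα} < 1/2. Then the Sturmian word s_{α,0} contains an abelian power of period m and exponent k ≥ 2 if and only if {mα} < 1/k. -/

import Mathlib

open scoped Classical

/-- The Parikh vector (number of `a`'s, number of `b`'s) of the length-`m` factor of the
Sturmian word `s_{α,0}` starting at position `n`, where the letter at position `p ≥ 1` is
`a` iff `{pα} ≥ {-α} = 1 - α`. -/
noncomputable def sturmParikh (α : ℝ) (n m : ℕ) : ℕ × ℕ :=
  (((Finset.range m).filter fun i => 1 - α ≤ Int.fract (((n + i : ℕ) : ℝ) * α)).card,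
   ((Finset.range m).filter fun i => Int.fract (((n + i : ℕ) : ℝ) * α) < 1 - α).card)


lemma myFloorAdd (x y : ℝ) :
    ⌊x + y⌋ = ⌊x⌋ + ⌊y⌋ + if 1 ≤ Int.fract x + Int.fract y then 1 else 0 := by
  have h : x + y = ((⌊x⌋ + ⌊y⌋ : ℤ) : ℝ) + (Int.fract x + Int.fract y) := by
    have hx : Int.fract x = x - ⌊x⌋ := rfl
    have hy : Int.fract y = y - ⌊y⌋ := rfl
    push_cast
    rw [hx, hy]; ring
  rw [h, Int.floor_intCast_add]
  congr 1
  have h0 : (0:ℝ) ≤ Int.fract x + Int.fract y :=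
    add_nonneg (Int.fract_nonneg x) (Int.fract_nonneg y)
  have h2 : Int.fract x + Int.fract y < 2 := by
    have := Int.fract_lt_one x; have := Int.fract_lt_one y; linarith
  split_ifs with h1
  · rw [Int.floor_eq_iff]
    constructor <;> [exact_mod_cast h1; exact_mod_cast h2]
  · rw [Int.floor_eq_iff]
    push_neg at h1
    refine ⟨by exact_mod_cast h0, by push_cast; linarith⟩

lemma myFractAdd (x y : ℝ) : Int.fract (x + y) = Int.fract (Int.fract x + Int.fract y) := by
  conv_lhs => rw [show x + y = (Int.fract x + Int.fract y) + ((⌊x⌋ + ⌊y⌋ : ℤ) : ℝ) by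
    have hx : Int.fract x = x - ⌊x⌋ := rfl
    have hy : Int.fract y = y - ⌊y⌋ := rfl
    push_cast; rw [hx, hy]; ring]
  rw [Int.fract_add_intCast]


lemma myExistsFractLt (α : ℝ) (hirr : Irrational α) {ε : ℝ} (hε : 0 < ε) (hε1 : ε ≤ 1) :
    ∃ n : ℕ, 1 ≤ n ∧ Int.fract ((n : ℝ) * α) < ε := by
  -- the subgroup generated by 1 and α is dense
  have hdense : Dense ((AddSubgroup.closure ({1, α} : Set ℝ) : AddSubgroup ℝ) : Set ℝ) := by
    rcases AddSubgroup.dense_or_cyclic (AddSubgroup.closure ({1, α} : Set ℝ)) with h | ⟨a, ha⟩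
    · exact h
    · exfalso
      have h1 : (1 : ℝ) ∈ AddSubgroup.closure ({1, α} : Set ℝ) :=
        AddSubgroup.subset_closure (by simp)
      have h2 : α ∈ AddSubgroup.closure ({1, α} : Set ℝ) :=
        AddSubgroup.subset_closure (by simp)
      rw [ha, AddSubgroup.mem_closure_singleton] at h1 h2
      obtain ⟨p, hp⟩ := h1
      obtain ⟨q, hq⟩ := h2
      rw [zsmul_eq_mul] at hp hq
      have hp0 : (p : ℝ) ≠ 0 := by
        intro h; rw [h, zero_mul] at hp; exact one_ne_zero hp.symm
      have hpα : (p : ℝ) * α = (q : ℝ) := by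
        have : (p : ℝ) * α = (q : ℝ) * ((p : ℝ) * a) := by rw [← hq]; ring
        rw [hp, mul_one] at this; exact this
      exact hirr ⟨(q : ℚ) / (p : ℚ), by
        push_cast
        rw [div_eq_iff hp0]
        linarith [hpα]⟩
  obtain ⟨g, hgS, hg0, hgε⟩ : ∃ g ∈ AddSubgroup.closure ({1, α} : Set ℝ), 0 < g ∧ g < ε := by
    obtain ⟨g, hgS, hgm⟩ := hdense.exists_mem_open isOpen_Ioo
      (⟨ε / 2, by constructor <;> linarith⟩ : (Set.Ioo (0:ℝ) ε).Nonempty)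
    exact ⟨g, hgS, hgm.1, hgm.2⟩
  have hg1 : g < 1 := lt_of_lt_of_le hgε hε1
  obtain ⟨a, b, hab⟩ := AddSubgroup.mem_closure_pair.1 hgS
  rw [zsmul_eq_mul, zsmul_eq_mul, mul_one] at hab
  have hb : b ≠ 0 := by
    rintro rfl
    rw [Int.cast_zero, zero_mul, add_zero] at hab
    have ha0 : 0 < a := by exact_mod_cast hab ▸ hg0
    have ha1 : a < 1 := by exact_mod_cast hab ▸ hg1
    omega
  have hgirr : Irrational g := hab ▸ ((hirr.intCast_mul hb).intCast_add a)
  have hfr : Int.fract ((b : ℝ) * α) = g := by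
    have h' : (b : ℝ) * α = g - a := by linarith
    rw [h', Int.fract_sub_intCast, Int.fract_eq_self.2 ⟨hg0.le, hg1⟩]
  rcases hb.lt_or_gt with hbneg | hbpos
  · -- negative coefficient: amplify
    set c : ℕ := (-b).toNat with hc
    have hcb : ((c : ℕ) : ℝ) = -(b : ℝ) := by
      have : ((c : ℕ) : ℤ) = -b := Int.toNat_of_nonneg (by omega)
      exact_mod_cast congrArg (fun z : ℤ => (z : ℝ)) this
    have hc1 : 1 ≤ c := by omega
    have hfc : Int.fract ((c : ℝ) * α) = 1 - g := by
      rw [hcb, neg_mul, Int.fract_neg (by rw [hfr]; exact hg0.ne'), hfr]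
    set t : ℕ := ⌊1 / g⌋₊ with ht
    have ht1 : 1 ≤ t := Nat.le_floor (by
      rw [Nat.cast_one, le_div_iff₀ hg0, one_mul]; exact hg1.le)
    have htg_le : (t : ℝ) * g ≤ 1 := by
      have h1 := Nat.floor_le (by positivity : (0:ℝ) ≤ 1 / g)
      calc (t : ℝ) * g ≤ (1 / g) * g := by
            exact mul_le_mul_of_nonneg_right h1 hg0.le
        _ = 1 := by field_simp
    have htg_irr : Irrational ((t : ℝ) * g) := hgirr.natCast_mul (by omega)
    have htg_lt : (t : ℝ) * g < 1 := lt_of_le_of_ne htg_le (by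
      simpa using htg_irr.ne_one)
    have htg_gt : 1 - g < (t : ℝ) * g := by
      have h1 := Nat.lt_floor_add_one (1 / g)
      have : 1 / g < (t : ℝ) + 1 := by exact_mod_cast h1
      have h2 : 1 < ((t : ℝ) + 1) * g := by
        rw [← div_lt_iff₀ hg0] at *
        linarith [this]
      nlinarith
    refine ⟨t * c, Nat.one_le_iff_ne_zero.2 (Nat.mul_ne_zero (by omega) (by omega)), ?_⟩
    have hkey : ((t * c : ℕ) : ℝ) * α = (1 - (t : ℝ) * g) + ((t * ⌊(c : ℝ) * α⌋ + t - 1 : ℤ) : ℝ) := by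
      have hfl : Int.fract ((c : ℝ) * α) = (c : ℝ) * α - ⌊(c : ℝ) * α⌋ := rfl
      rw [hfl] at hfc
      push_cast
      nlinarith [hfc]
    rw [hkey, Int.fract_add_intCast, Int.fract_eq_self.2 ⟨by linarith, by nlinarith⟩]
    linarith
  · refine ⟨b.toNat, by omega, ?_⟩
    have : ((b.toNat : ℕ) : ℝ) = (b : ℝ) := by
      exact_mod_cast congrArg (fun z : ℤ => (z : ℝ)) (Int.toNat_of_nonneg hbpos.le)
    rw [this, hfr]; exact hgε


lemma parikh_fst (α : ℝ) (hα : α ∈ Set.Ioo (0 : ℝ) 1) (n m : ℕ) :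
    ((sturmParikh α n m).1 : ℤ) = ⌊(m : ℝ) * α⌋ +
      if 1 - Int.fract ((m : ℝ) * α) ≤ Int.fract ((n : ℝ) * α) then 1 else 0 := by
  obtain ⟨hα0, hα1⟩ := hα
  have hstep : ∀ p : ℕ, ((if 1 - α ≤ Int.fract ((p : ℝ) * α) then (1:ℤ) else 0))
      = ⌊((p+1 : ℕ) : ℝ) * α⌋ - ⌊((p : ℕ) : ℝ) * α⌋ := by
    intro p
    have he : ((p+1 : ℕ) : ℝ) * α = (p : ℝ) * α + α := by push_cast; ring
    rw [he, myFloorAdd, Int.fract_eq_self.2 ⟨hα0.le, hα1⟩]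
    have hc : (1 ≤ Int.fract ((p:ℝ)*α) + α) ↔ (1 - α ≤ Int.fract ((p:ℝ)*α)) := by
      constructor <;> intro h <;> linarith
    rw [if_congr hc rfl rfl]
    have hz : ⌊α⌋ = 0 := by
      rw [Int.floor_eq_iff] <;> norm_num <;> constructor <;> linarith
    rw [hz]; ring
  have hsum : ((sturmParikh α n m).1 : ℤ)
      = ∑ i ∈ Finset.range m, (if 1 - α ≤ Int.fract (((n + i : ℕ) : ℝ) * α) then (1:ℤ) else 0) := by
    show ((((Finset.range m).filter
        fun i => 1 - α ≤ Int.fract (((n + i : ℕ) : ℝ) * α)).card : ℤ) = _)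
    rw [Finset.card_filter]
    push_cast
    exact Finset.sum_congr rfl fun i _ => by split_ifs <;> norm_num
  rw [hsum]
  have htel : ∑ i ∈ Finset.range m,
      (if 1 - α ≤ Int.fract (((n + i : ℕ) : ℝ) * α) then (1:ℤ) else 0)
      = ⌊((n + m : ℕ) : ℝ) * α⌋ - ⌊((n : ℕ) : ℝ) * α⌋ := by
    have h2 := Finset.sum_range_sub (fun i => ⌊((n + i : ℕ) : ℝ) * α⌋) m
    simp only [Nat.add_zero] at h2
    rw [← h2]
    refine Finset.sum_congr rfl fun i _ => ?_
    rw [hstep (n + i), ← Nat.add_assoc]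
  rw [htel]
  have : ((n + m : ℕ) : ℝ) * α = (n : ℝ) * α + (m : ℝ) * α := by push_cast; ring
  rw [this, myFloorAdd]
  have hc2 : (1 ≤ Int.fract ((n:ℝ)*α) + Int.fract ((m:ℝ)*α))
      ↔ (1 - Int.fract ((m:ℝ)*α) ≤ Int.fract ((n:ℝ)*α)) := by
    constructor <;> intro h <;> linarith
  rw [if_congr hc2 rfl rfl]
  ring

lemma parikh_card (α : ℝ) (n m : ℕ) :
    (sturmParikh α n m).1 + (sturmParikh α n m).2 = m := by
  unfold sturmParikh
  rw [Finset.card_filter, Finset.card_filter, ← Finset.sum_add_distrib]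
  have h1 : ∀ i ∈ Finset.range m,
      ((if 1 - α ≤ Int.fract (((n + i : ℕ) : ℝ) * α) then 1 else 0) +
       (if Int.fract (((n + i : ℕ) : ℝ) * α) < 1 - α then 1 else 0)) = 1 := by
    intro i _
    split_ifs with ha hb hb
    · linarith
    · rfl
    · rfl
    · push_neg at ha; linarith
  rw [Finset.sum_congr rfl h1, Finset.sum_const, Finset.card_range, smul_eq_mul, mul_one]

lemma parikh_eq_iff (α : ℝ) (hα : α ∈ Set.Ioo (0 : ℝ) 1) (n n' m : ℕ) :
    sturmParikh α n m = sturmParikh α n' m ↔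
      ((1 - Int.fract ((m : ℝ) * α) ≤ Int.fract ((n : ℝ) * α)) ↔
       (1 - Int.fract ((m : ℝ) * α) ≤ Int.fract ((n' : ℝ) * α))) := by
  constructor
  · intro h
    have h1 := parikh_fst α hα n m
    have h2 := parikh_fst α hα n' m
    rw [h] at h1
    rw [h2] at h1
    split_ifs at h1 with p1 p2 p2
    · exact ⟨fun _ => p1, fun _ => p2⟩
    · omega
    · omega
    · exact ⟨fun h => absurd h p2, fun h => absurd h p1⟩
  · intro h
    have h1 := parikh_fst α hα n m
    have h2 := parikh_fst α hα n' m
    have hfst : (sturmParikh α n m).1 = (sturmParikh α n' m).1 := by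
      rw [if_congr h rfl rfl] at h1
      rw [← h2] at h1
      exact_mod_cast h1
    have hc1 := parikh_card α n m
    have hc2 := parikh_card α n' m
    exact Prod.ext hfst (by omega)

/-- The factor of `s_{α,0}` of length `k*m` starting at position `n` is an abelian power
of period `m` and exponent `k`: its `k` consecutive blocks of length `m` share the same
Parikh vector. -/
noncomputable def HasAbelianPowerAt (α : ℝ) (n m k : ℕ) : Prop :=
  ∀ j < k, sturmParikh α (n + j * m) m = sturmParikh α n m

/-- The Sturmian word `s_{α,0}` contains an abelian power of period `m` and exponent `k`. -/
noncomputable def HasAbelianPower (α : ℝ) (m k : ℕ) : Prop :=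
  ∃ n : ℕ, 1 ≤ n ∧ HasAbelianPowerAt α n m k

/-- For irrational `α ∈ (0,1)` and `m ≥ 1` with `{mα} < 1/2`, the word
`s_{α,0}` contains an abelian power of period `m` and exponent `k ≥ 2` iff `{mα} < 1/k`. -/
theorem hasAbelianPower_iff_of_fract_lt_half
    (α : ℝ) (hα : α ∈ Set.Ioo (0 : ℝ) 1) (hirr : Irrational α)
    (m : ℕ) (hm : 0 < m) (hhalf : Int.fract ((m : ℝ) * α) < 1 / 2)
    (k : ℕ) (hk : 2 ≤ k) :
    HasAbelianPower α m k ↔ Int.fract ((m : ℝ) * α) < 1 / (k : ℝ) := by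
  set β : ℝ := Int.fract ((m : ℝ) * α) with hβ
  have hk0 : (0 : ℝ) < k := by positivity
  have hmirr : Irrational ((m : ℝ) * α) := by
    have := hirr.intCast_mul (m := (m : ℤ)) (by exact_mod_cast hm.ne')
    simpa using this
  have hβirr : Irrational β := hmirr.sub_intCast ⌊(m : ℝ) * α⌋
  have hβ0 : 0 < β := lt_of_le_of_ne (Int.fract_nonneg _) (Ne.symm hβirr.ne_zero)
  -- the recurrence for fract along steps of m
  have hrec : ∀ q : ℕ, Int.fract (((q + m : ℕ) : ℝ) * α)
      = Int.fract (Int.fract ((q : ℝ) * α) + β) := by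
    intro q
    have he : ((q + m : ℕ) : ℝ) * α = (q : ℝ) * α + (m : ℝ) * α := by push_cast; ring
    rw [he, myFractAdd]
  constructor
  · rintro ⟨n, hn1, hab⟩
    by_contra hcon
    push_neg at hcon
    have hkβ : 1 < (k : ℝ) * β := by
      have h1 : 1 ≤ (k : ℝ) * β := by
        rw [div_le_iff₀ hk0] at hcon; linarith
      refine lt_of_le_of_ne h1 ?_
      have : Irrational ((k : ℝ) * β) := hβirr.natCast_mul (by omega)
      exact (this.ne_one).symm
    have hiff : ∀ j < k, ((1 - β ≤ Int.fract (((n + j * m : ℕ) : ℝ) * α)) ↔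
        (1 - β ≤ Int.fract (((n : ℕ) : ℝ) * α))) := by
      intro j hj
      exact (parikh_eq_iff α hα (n + j * m) n m).1 (hab j hj)
    by_cases hc : 1 - β ≤ Int.fract ((n : ℝ) * α)
    · -- all blocks start in [1-β, 1): contradiction with β < 1/2
      have h1 : 1 - β ≤ Int.fract (((n + 1 * m : ℕ) : ℝ) * α) := (hiff 1 (by omega)).2 hc
      have he : Int.fract (((n + 1 * m : ℕ) : ℝ) * α)
          = Int.fract ((n : ℝ) * α) + β - 1 := by
        rw [show n + 1 * m = n + m by ring, hrec n]
        have hx1 : Int.fract ((n : ℝ) * α) < 1 := Int.fract_lt_one _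
        rw [← Int.fract_sub_intCast (Int.fract ((n : ℝ) * α) + β) 1,
          show Int.fract ((n : ℝ) * α) + β - ((1 : ℤ) : ℝ)
            = Int.fract ((n : ℝ) * α) + β - 1 by push_cast; ring,
          Int.fract_eq_self.2 ⟨by linarith, by linarith⟩]
      rw [he] at h1
      have hx1 : Int.fract ((n : ℝ) * α) < 1 := Int.fract_lt_one _
      linarith
    · -- all blocks start in [0, 1-β): fract increases by β each step, no wrap
      push_neg at hc
      have key : ∀ j < k, Int.fract (((n + j * m : ℕ) : ℝ) * α)
          = Int.fract ((n : ℝ) * α) + j * β := by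
        intro j
        induction j with
        | zero => intro _; simp
        | succ j ih =>
          intro hj
          have hj' : j < k := by omega
          have hx := ih hj'
          have hcj : Int.fract (((n + j * m : ℕ) : ℝ) * α) < 1 - β := by
            by_contra hcc
            push_neg at hcc
            exact (not_le.2 hc) ((hiff j hj').1 hcc)
          have he : n + (j + 1) * m = (n + j * m) + m := by ring
          rw [he, hrec (n + j * m), hx]
          rw [hx] at hcj
          have h0' : (0:ℝ) ≤ Int.fract ((n : ℝ) * α) := Int.fract_nonneg _
          have h0'' : (0:ℝ) ≤ (j : ℝ) * β := by positivity
          rw [Int.fract_eq_self.2 ⟨by linarith, by linarith⟩]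
          push_cast; ring
      have hlast := key (k - 1) (by omega)
      have hclast : Int.fract (((n + (k - 1) * m : ℕ) : ℝ) * α) < 1 - β := by
        by_contra hcc
        push_neg at hcc
        exact (not_le.2 hc) ((hiff (k - 1) (by omega)).1 hcc)
      rw [hlast] at hclast
      have hcast : ((k - 1 : ℕ) : ℝ) = (k : ℝ) - 1 := by
        have : (1 : ℕ) ≤ k := by omega
        push_cast [this]; ring
      rw [hcast] at hclast
      have h0 : 0 ≤ Int.fract ((n : ℝ) * α) := Int.fract_nonneg _
      nlinarith
  · intro hlt
    have hkβ : (k : ℝ) * β < 1 := by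
      rw [lt_div_iff₀ hk0] at hlt; linarith
    obtain ⟨n, hn1, hnf⟩ := myExistsFractLt α hirr (ε := 1 - (k : ℝ) * β)
      (by linarith) (by nlinarith)
    refine ⟨n, hn1, ?_⟩
    have key : ∀ j < k, Int.fract (((n + j * m : ℕ) : ℝ) * α)
        = Int.fract ((n : ℝ) * α) + j * β := by
      intro j
      induction j with
      | zero => intro _; simp
      | succ j ih =>
        intro hj
        have hj' : j < k := by omega
        have hx := ih hj'
        have hjk : ((j : ℝ) + 1) ≤ (k : ℝ) := by exact_mod_cast Nat.le_of_lt hj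
        have he : n + (j + 1) * m = (n + j * m) + m := by ring
        rw [he, hrec (n + j * m), hx]
        have h0 : 0 ≤ Int.fract ((n : ℝ) * α) := Int.fract_nonneg _
        have hlt1 : Int.fract ((n : ℝ) * α) + (j : ℝ) * β + β < 1 := by nlinarith
        rw [Int.fract_eq_self.2 ⟨by positivity, by linarith⟩]
        push_cast; ring
    intro j hj
    rw [parikh_eq_iff α hα (n + j * m) n m]
    have h0 : 0 ≤ Int.fract ((n : ℝ) * α) := Int.fract_nonneg _
    have hjk : (j : ℝ) ≤ (k : ℝ) - 1 := by
      have hj' : ((j + 1 : ℕ) : ℝ) ≤ (k : ℝ) := by exact_mod_cast hj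
      push_cast at hj'
      linarith
    have hfalse1 : ¬ (1 - β ≤ Int.fract (((n + j * m : ℕ) : ℝ) * α)) := by
      rw [key j hj]
      push_neg
      nlinarith
    have hfalse2 : ¬ (1 - β ≤ Int.fract ((n : ℝ) * α)) := by
      push_neg
      nlinarith
    exact ⟨fun h => absurd h hfalse1, fun h => absurd h hfalse2⟩
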